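/- arXiv:1012.4049 — 2 statements merged into one kernel-verified Lean document; each statement's English description precedes it below -/
import Mathlib

section
/- Let d₁, d₂ and n be integers with d₁ ∉ {1,2} and d₂ ∉ {1,2}, and suppose that in SL(2,ℤ) the product X₂·X₁^{d₁}·X₂·X₁^{d₂}·X₂ equals X₁ⁿ or −X₁ⁿ. Then d₁ = d₂ = 3 and n = −3; moreover X₂·X₁³·X₂·X₁³·X₂ = X₁⁻³. (This is the algebraic core of the classification of genus-1 simplified broken Lefschetz fibrations with three Lefschetz singularities, with dᵢ = nᵢ − n_{i+1} for a Hurwitz system (X₁^{−n₁}X₂X₁^{n₁}, X₁^{−n₂}X₂X₁^{n₂}, X₁^{−n₃}X₂X₁^{n₃}).) -/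
/-- `SL(2,ℤ)`. -/
abbrev SL2Z := Matrix.SpecialLinearGroup (Fin 2) ℤ

/-- The matrix `X₁` with rows `(1,0),(1,1)`. -/
def X1 : SL2Z := ⟨!![1, 0; 1, 1], by norm_num [Matrix.det_fin_two_of]⟩

/-- The matrix `X₂` with rows `(1,-1),(0,1)`. -/
def X2 : SL2Z := ⟨!![1, -1; 0, 1], by norm_num [Matrix.det_fin_two_of]⟩

/-- `-E`, the negative of the identity matrix, as an element of `SL(2,ℤ)`. -/
def negE : SL2Z := ⟨!![-1, 0; 0, -1], by norm_num [Matrix.det_fin_two_of]⟩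

def X1p (d : ℤ) : SL2Z := ⟨!![1, 0; d, 1], by norm_num [Matrix.det_fin_two_of]⟩

lemma X1_zpow (d : ℤ) : X1 ^ d = X1p d := by
  induction d using Int.induction_on with
  | zero => ext i j; fin_cases i <;> fin_cases j <;> simp [X1p]
  | succ k ih =>
      rw [zpow_add_one, ih]
      ext i j; fin_cases i <;> fin_cases j <;>
        (simp only [Matrix.SpecialLinearGroup.coe_mul]; simp [X1p, X1, Matrix.mul_apply, Fin.sum_univ_two])
  | pred k ih =>
      rw [zpow_sub_one, ih]
      have hX1inv : X1⁻¹ = X1p (-1) := by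
        refine (eq_inv_of_mul_eq_one_left ?_).symm
        ext i j; fin_cases i <;> fin_cases j <;>
          (simp only [Matrix.SpecialLinearGroup.coe_mul]; simp [X1p, X1, Matrix.mul_apply, Fin.sum_univ_two])
      rw [hX1inv]
      ext i j; fin_cases i <;> fin_cases j <;>
        (simp only [Matrix.SpecialLinearGroup.coe_mul]; simp [X1p, Matrix.mul_apply, Fin.sum_univ_two]) <;> ring

lemma prod33 : X2 * X1 ^ (3 : ℤ) * X2 * X1 ^ (3 : ℤ) * X2 = X1 ^ (-3 : ℤ) := by
  rw [X1_zpow 3, X1_zpow (-3)]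
  ext i j
  fin_cases i <;> fin_cases j <;>
    (simp only [Matrix.SpecialLinearGroup.coe_mul]; simp [X1p, X2, Matrix.mul_apply, Fin.sum_univ_two])

/-- if `d₁, d₂ ∉ {1,2}` and `X₂·X₁^{d₁}·X₂·X₁^{d₂}·X₂ = ±X₁ⁿ` in
`SL(2,ℤ)`, then `d₁ = d₂ = 3` and `n = −3`; moreover
`X₂·X₁³·X₂·X₁³·X₂ = X₁⁻³`. -/
theorem three_singularities_case (d₁ d₂ n : ℤ)
    (hd₁ : d₁ ≠ 1 ∧ d₁ ≠ 2) (hd₂ : d₂ ≠ 1 ∧ d₂ ≠ 2)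
    (h : X2 * X1 ^ d₁ * X2 * X1 ^ d₂ * X2 = X1 ^ n ∨
         X2 * X1 ^ d₁ * X2 * X1 ^ d₂ * X2 = negE * X1 ^ n) :
    d₁ = 3 ∧ d₂ = 3 ∧ n = -3 ∧
      X2 * X1 ^ (3 : ℤ) * X2 * X1 ^ (3 : ℤ) * X2 = X1 ^ (-3 : ℤ) := by
  rw [X1_zpow d₁, X1_zpow d₂, X1_zpow n] at h
  rcases h with h | h
  · have e00 := congr_arg (fun m : SL2Z => m.1 0 0) h
    have e01 := congr_arg (fun m : SL2Z => m.1 0 1) h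
    have e10 := congr_arg (fun m : SL2Z => m.1 1 0) h
    simp only [Matrix.SpecialLinearGroup.coe_mul] at e00 e01 e10; simp [X1p, X2, Matrix.mul_apply, Fin.sum_univ_two] at e00 e01 e10
    have hd1 : d₁ = 3 := by linarith
    subst hd1
    have hd2 : d₂ = 3 := by nlinarith
    subst hd2
    have hn : n = -3 := by nlinarith
    exact ⟨rfl, rfl, hn, prod33⟩
  · exfalso
    have e00 := congr_arg (fun m : SL2Z => m.1 0 0) h
    have e01 := congr_arg (fun m : SL2Z => m.1 0 1) h
    simp only [Matrix.SpecialLinearGroup.coe_mul] at e00 e01; simp [X1p, X2, negE, Matrix.mul_apply, Fin.sum_univ_two] at e00 e01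
    have : d₁ = 1 := by linarith
    exact hd₁.1 this
end

section
/- In SL(2,ℤ): for every integer d ≤ 0, X₂·X₁^d·X₂ = (BA)^{−d}·BA²·BA², and for every integer d ≥ 2, X₂·X₁^d·X₂ = A²·(BA²)^{d−2}·BA·BA². (These are the reduced-word expressions, in the generators a, b of PSL(2,ℤ) ≅ ℤ/3 ∗ ℤ/2, of the products arising from Hurwitz systems with two Lefschetz singularities.) -/
/-- The matrix `A` with rows `(0,-1),(1,1)`. -/
def A : SL2Z := ⟨!![0, -1; 1, 1], by norm_num [Matrix.det_fin_two_of]⟩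

/-- The matrix `B` with rows `(1,2),(-1,-1)`. -/
def B : SL2Z := ⟨!![1, 2; -1, -1], by norm_num [Matrix.det_fin_two_of]⟩

set_option linter.unnecessarySeqFocus false
set_option linter.unreachableTactic false
set_option linter.unusedTactic false


lemma X1_zpow_s12 (n : ℤ) : ((X1 ^ n : SL2Z) : Matrix (Fin 2) (Fin 2) ℤ) = !![1,0;n,1] := by
  induction n using Int.induction_on with
  | zero => simp [Matrix.one_fin_two]
  | succ k ih =>
      rw [_root_.zpow_add_one, Matrix.SpecialLinearGroup.coe_mul, ih]
      show _ = !![1,0;(k:ℤ)+1,1]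
      ext i j
      fin_cases i <;> fin_cases j <;>
        simp [X1, Matrix.mul_apply, Fin.sum_univ_two] <;> ring
  | pred k ih =>
      rw [show (-(k:ℤ)-1) = -k - 1 by ring, _root_.zpow_sub_one,
        Matrix.SpecialLinearGroup.coe_mul, ih, Matrix.SpecialLinearGroup.SL2_inv_expl]
      show _ = !![1,0;-(k:ℤ)-1,1]
      ext i j
      fin_cases i <;> fin_cases j <;>
        rw [Matrix.mul_apply] <;> simp [X1, Matrix.mul_apply, Fin.sum_univ_two] <;> ring

lemma X2_zpow (n : ℤ) : ((X2 ^ n : SL2Z) : Matrix (Fin 2) (Fin 2) ℤ) = !![1,-n;0,1] := by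
  induction n using Int.induction_on with
  | zero => simp [Matrix.one_fin_two]
  | succ k ih =>
      rw [_root_.zpow_add_one, Matrix.SpecialLinearGroup.coe_mul, ih]
      show _ = !![1,-((k:ℤ)+1);0,1]
      ext i j
      fin_cases i <;> fin_cases j <;>
        simp [X2, Matrix.mul_apply, Fin.sum_univ_two] <;> ring
  | pred k ih =>
      rw [show (-(k:ℤ)-1) = -k - 1 by ring, _root_.zpow_sub_one,
        Matrix.SpecialLinearGroup.coe_mul, ih, Matrix.SpecialLinearGroup.SL2_inv_expl]
      show _ = !![1,-(-(k:ℤ)-1);0,1]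
      ext i j
      fin_cases i <;> fin_cases j <;>
        rw [Matrix.mul_apply] <;> simp [X2, Matrix.mul_apply, Fin.sum_univ_two] <;> ring

lemma BA_coe : ((B * A : SL2Z) : Matrix (Fin 2) (Fin 2) ℤ) = !![2,1;-1,0] := by
  rw [Matrix.SpecialLinearGroup.coe_mul]
  ext i j
  fin_cases i <;> fin_cases j <;>
    simp [A, B, Matrix.mul_apply, Fin.sum_univ_two]

lemma BA_zpow (n : ℤ) :
    (((B * A) ^ n : SL2Z) : Matrix (Fin 2) (Fin 2) ℤ) = !![1+n,n;-n,1-n] := by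
  induction n using Int.induction_on with
  | zero => simp [Matrix.one_fin_two]
  | succ k ih =>
      rw [_root_.zpow_add_one, Matrix.SpecialLinearGroup.coe_mul, ih, BA_coe]
      show _ = !![1+((k:ℤ)+1),(k:ℤ)+1;-((k:ℤ)+1),1-((k:ℤ)+1)]
      ext i j
      fin_cases i <;> fin_cases j <;>
        simp [B, A, Matrix.mul_apply, Fin.sum_univ_two] <;> ring
  | pred k ih =>
      rw [show (-(k:ℤ)-1) = -k - 1 by ring, _root_.zpow_sub_one,
        Matrix.SpecialLinearGroup.coe_mul, ih, Matrix.SpecialLinearGroup.SL2_inv_expl]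
      show _ = !![1+(-(k:ℤ)-1),-(k:ℤ)-1;-(-(k:ℤ)-1),1-(-(k:ℤ)-1)]
      ext i j
      fin_cases i <;> fin_cases j <;>
        rw [Matrix.mul_apply] <;> simp only [BA_coe] <;> simp [B, A, BA_coe, Matrix.mul_apply, Fin.sum_univ_two] <;> ring

lemma BA2_eq_X2 : B * A ^ 2 = X2 := by
  apply Subtype.ext
  rw [sq, Matrix.SpecialLinearGroup.coe_mul, Matrix.SpecialLinearGroup.coe_mul]
  ext i j
  fin_cases i <;> fin_cases j <;>
    simp [A, B, X2, Matrix.mul_apply, Fin.sum_univ_two]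

/-- in `SL(2,ℤ)`, for `d ≤ 0` one has
`X₂·X₁^d·X₂ = (BA)^{−d}·BA²·BA²`, and for `d ≥ 2` one has
`X₂·X₁^d·X₂ = A²·(BA²)^{d−2}·BA·BA²`. -/
theorem X2_X1_X2_reduced_word (d : ℤ) :
    (d ≤ 0 → X2 * X1 ^ d * X2 = (B * A) ^ (-d) * (B * A ^ 2) * (B * A ^ 2)) ∧
    (2 ≤ d → X2 * X1 ^ d * X2 = A ^ 2 * (B * A ^ 2) ^ (d - 2) * (B * A) * (B * A ^ 2)) := by
  constructor <;> intro _ <;> apply Subtype.ext <;>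
    simp only [BA2_eq_X2, Matrix.SpecialLinearGroup.coe_mul, X1_zpow_s12, X2_zpow, BA_zpow,
      show ((X2 : SL2Z) : Matrix (Fin 2) (Fin 2) ℤ) = !![1,-1;0,1] from rfl,
      show ((A ^ 2 : SL2Z) : Matrix (Fin 2) (Fin 2) ℤ) = !![-1,-1;1,0] by
        rw [sq, Matrix.SpecialLinearGroup.coe_mul]
        ext i j
        fin_cases i <;> fin_cases j <;> simp [A, Matrix.mul_apply, Fin.sum_univ_two],
      BA_coe] <;>
    ext i j <;>
    fin_cases i <;> fin_cases j <;>
      simp [B, A, Matrix.mul_apply, Fin.sum_univ_two] <;> ring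
end
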